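/- Let β>0, γ>0, σ>1, 0<α<1, S₀>0, R₀ᵢₙᵢₜ≥0, define r(S) := (γ/(σβ))·(1 − (1 − (σβ/γ)·R₀ᵢₙᵢₜ)·(S/S₀)^σ) and R̂(S) := (β/γ)·(S + ασ·r(S)) for 0≤S≤S₀, and assume R̂(S₀) = (β/γ)·(S₀ + ασR₀ᵢₙᵢₜ) ≤ 1. If (β/γ)·(S₀ + ασ²R₀ᵢₙᵢₜ) ≥ ασ, then R̂(S) ≤ 1 for all 0 ≤ S ≤ S₀. -/

import Mathlib

/-- For `σ > 1`, if `ℛ₀ = (β/γ)(S₀ + ασR₀) ≤ 1` and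
`(β/γ)(S₀ + ασ²R₀) ≥ ασ`, then `R̂(S) ≤ 1` for all `0 ≤ S ≤ S₀`. -/
theorem sirb_Rhat_le_one_sigma_gt_one_case1 (β γ σ α S₀ R₀init : ℝ)
    (hβ : 0 < β) (hγ : 0 < γ) (hσ : 1 < σ) (hα0 : 0 < α) (hα1 : α < 1)
    (hS₀ : 0 < S₀) (hR₀ : 0 ≤ R₀init)
    (r Rhat : ℝ → ℝ)
    (hr : ∀ S : ℝ, r S = γ / (σ * β) * (1 - (1 - σ * β / γ * R₀init) * (S / S₀) ^ σ))
    (hRhat : ∀ S : ℝ, Rhat S = β / γ * (S + α * σ * r S))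
    (hR0le : β / γ * (S₀ + α * σ * R₀init) ≤ 1)
    (hcase : α * σ ≤ β / γ * (S₀ + α * σ ^ 2 * R₀init)) :
    ∀ S : ℝ, 0 ≤ S → S ≤ S₀ → Rhat S ≤ 1 := by
  intro S hS0 hSle
  have hσ0 : (0:ℝ) < σ := by linarith
  set b : ℝ := β / γ with hb
  have hb0 : 0 < b := div_pos hβ hγ
  set x : ℝ := S / S₀ with hxdef
  have hx0 : 0 ≤ x := div_nonneg hS0 hS₀.le
  have hx1 : x ≤ 1 := (div_le_one hS₀).mpr hSle
  set c : ℝ := 1 - σ * β / γ * R₀init with hc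
  have hS : S = x * S₀ := by rw [hxdef, div_mul_cancel₀ _ hS₀.ne']
  have key : Rhat S = b * S₀ * x + α * (1 - c * x ^ σ) := by
    rw [hRhat, hr, hS]
    have hbd : β / γ = b := rfl
    rw [hb]
    field_simp
  have hcb : σ * b * R₀init = 1 - c := by
    rw [hc, hb]; ring
  -- hR0le rewritten: b * S₀ + α * (1 - c) ≤ 1
  have hR1 : b * S₀ + α * (1 - c) ≤ 1 := by
    have : b * (S₀ + α * σ * R₀init) = b * S₀ + α * (σ * b * R₀init) := by ring
    rw [hcb] at this
    linarith [hR0le, this ▸ hR0le]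
  -- hcase rewritten: α * σ * c ≤ b * S₀
  have hcase' : α * σ * c ≤ b * S₀ := by
    have h2 : b * (S₀ + α * σ ^ 2 * R₀init) = b * S₀ + α * σ * (σ * b * R₀init) := by ring
    rw [hcb] at h2
    nlinarith [hcase, h2]
  -- main inequality: α * c * (1 - x^σ) ≤ b * S₀ * (1 - x)
  have hmain : α * c * (1 - x ^ σ) ≤ b * S₀ * (1 - x) := by
    rcases le_or_gt 0 c with hcpos | hcneg
    · -- Bernoulli: 1 + σ * (x - 1) ≤ x ^ σ
      have hbern : 1 + σ * (x - 1) ≤ x ^ σ := by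
        have := one_add_mul_self_le_rpow_one_add (by linarith : (-1:ℝ) ≤ x - 1) hσ.le
        simpa using this
      nlinarith [mul_le_mul_of_nonneg_left hbern (mul_nonneg hα0.le hcpos)]
    · have hxσ1 : x ^ σ ≤ 1 := Real.rpow_le_one hx0 hx1 hσ0.le
      have hαc : α * c ≤ 0 := mul_nonpos_of_nonneg_of_nonpos hα0.le hcneg.le
      have h1 : α * c * (1 - x ^ σ) ≤ 0 := mul_nonpos_of_nonpos_of_nonneg hαc (by linarith)
      have h2 : 0 ≤ b * S₀ * (1 - x) := mul_nonneg (by positivity) (by linarith)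
      linarith
  rw [key]
  nlinarith [hmain, hR1]
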